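/- For every λ > 0, every α ∈ ℝⁿ and every φ ∈ BUC_η, the function ψ(θ) = (1/λ) e^{λθ}[α + φ(0)] + ∫_θ^0 e^{λ(θ-l)} φ(l) dl belongs to BUC_η, is continuously differentiable with ψ' ∈ BUC_η, and satisfies ψ'(0) = α and λψ - ψ' = φ. -/

import Mathlib

open Set Filter Topology

noncomputable def etaNorm (η : ℝ) {F : Type*} [NormedAddCommGroup F] (φ : ℝ → F) : ℝ :=
  sSup ((fun θ => Real.exp (η * θ) * ‖φ θ‖) '' Set.Iic 0)

def BUCmem (η : ℝ) {F : Type*} [NormedAddCommGroup F] [NormedSpace ℝ F] (φ : ℝ → F) : Prop :=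
  ContinuousOn φ (Set.Iic 0) ∧
  BddAbove ((fun θ => Real.exp (η * θ) * ‖φ θ‖) '' Set.Iic 0) ∧
  UniformContinuousOn (fun θ => Real.exp (η * θ) • φ θ) (Set.Iic 0)

def BUC1mem (η : ℝ) {F : Type*} [NormedAddCommGroup F] [NormedSpace ℝ F] (φ φ' : ℝ → F) : Prop :=
  BUCmem η φ ∧ BUCmem η φ' ∧ ∀ θ ≤ (0:ℝ), HasDerivWithinAt φ (φ' θ) (Set.Iic 0) θ

private lemma aux_integral_exp_mul {c : ℝ} (hc : c ≠ 0) (a b : ℝ) :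
    ∫ x in a..b, Real.exp (c * x) = (Real.exp (c * b) - Real.exp (c * a)) / c := by
  have D : ∀ x : ℝ, HasDerivAt (fun y : ℝ => Real.exp (c * y) / c) (Real.exp (c * x)) x := by
    intro x
    have h : HasDerivAt (fun y : ℝ => Real.exp (c * y)) (Real.exp (c * x) * c) x :=
      HasDerivAt.exp (by simpa using (hasDerivAt_id x).const_mul c)
    simpa [mul_div_cancel_right₀ _ hc] using h.div_const c
  rw [intervalIntegral.integral_eq_sub_of_hasDerivAt (fun x _ => D x)
      ((Real.continuous_exp.comp (continuous_const.mul continuous_id)).intervalIntegrable a b)]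
  ring

set_option maxHeartbeats 1600000 in
/-- for `λ > 0`, `α ∈ ℝⁿ`, `φ ∈ BUC_η`, the function
`ψ(θ) = (1/λ) e^{λθ}[α + φ(0)] + ∫_θ^0 e^{λ(θ-l)} φ(l) dl` belongs to `BUC_η¹`
(`ψ` is C¹ with `ψ, ψ' ∈ BUC_η`) and satisfies `ψ'(0) = α` and `λψ - ψ' = φ` on `(-∞,0]`. -/
theorem resolvent_formula (η : ℝ) (hη : 0 < η) (n : ℕ) (lam : ℝ) (hlam : 0 < lam)
    (α : Fin n → ℝ) (φ : ℝ → (Fin n → ℝ)) (hφ : BUCmem η φ)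
    (ψ : ℝ → (Fin n → ℝ))
    (hψ : ψ = fun θ => ((1 / lam) * Real.exp (lam * θ)) • (α + φ 0)
        + ∫ l in θ..(0:ℝ), Real.exp (lam * (θ - l)) • φ l) :
    ∃ ψ' : ℝ → (Fin n → ℝ), BUC1mem η ψ ψ' ∧ ψ' 0 = α ∧
      ∀ θ ≤ (0:ℝ), lam • ψ θ - ψ' θ = φ θ := by
  obtain ⟨M, hM⟩ := hφ.2.1
  have hMb : ∀ θ : ℝ, θ ≤ 0 → Real.exp (η * θ) * ‖φ θ‖ ≤ M := fun θ hθ =>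
    hM ⟨θ, hθ, rfl⟩
  have hM0 : 0 ≤ M := le_trans (by positivity) (hMb 0 le_rfl)
  set c : Fin n → ℝ := α + φ 0 with hcdef
  set φt : ℝ → Fin n → ℝ := fun θ => φ (min θ 0) with hφtdef
  have hφtc : Continuous φt :=
    hφ.1.comp_continuous (continuous_id.min continuous_const) fun x => mem_Iic.2 (min_le_right x 0)
  have hφteq : ∀ θ : ℝ, θ ≤ 0 → φt θ = φ θ := fun θ hθ => by
    simp [hφtdef, min_eq_left hθ]
  set f : ℝ → Fin n → ℝ := fun l => Real.exp (-(lam * l)) • φt l with hfdef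
  have hfc : Continuous f :=
    ((Real.continuous_exp.comp (continuous_const.mul continuous_id).neg)).smul hφtc
  set G : ℝ → Fin n → ℝ := fun θ => ∫ l in θ..(0:ℝ), f l with hGdef
  have hG : ∀ θ : ℝ, HasDerivAt G (-(f θ)) θ := by
    intro θ
    have h1 : HasDerivAt (fun u => ∫ l in (0:ℝ)..u, f l) (f θ) θ :=
      (hfc.integral_hasStrictDerivAt 0 θ).hasDerivAt
    have h2 : G = fun u => -∫ l in (0:ℝ)..u, f l := by
      funext u
      rw [hGdef]
      exact intervalIntegral.integral_symm 0 u
    rw [h2]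
    exact h1.neg
  set ψt : ℝ → Fin n → ℝ :=
    fun θ => ((1 / lam) * Real.exp (lam * θ)) • c + Real.exp (lam * θ) • G θ with hψtdef
  have hψeq : ∀ θ : ℝ, θ ≤ 0 → ψ θ = ψt θ := by
    intro θ hθ
    rw [hψ, hψtdef]
    simp only
    congr 1
    rw [hGdef]
    simp only
    rw [← intervalIntegral.integral_smul]
    apply intervalIntegral.integral_congr
    intro l hl
    rw [uIcc_of_le hθ] at hl
    have hl0 : l ≤ 0 := hl.2
    rw [hfdef]
    simp only [smul_smul, ← Real.exp_add, hφteq l hl0]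
    rw [show lam * θ + -(lam * l) = lam * (θ - l) by ring]
  have hψtd : ∀ θ : ℝ, HasDerivAt ψt (lam • ψt θ - φt θ) θ := by
    intro θ
    have he : HasDerivAt (fun u => Real.exp (lam * u)) (Real.exp (lam * θ) * lam) θ :=
      HasDerivAt.exp (by simpa using (hasDerivAt_id θ).const_mul lam)
    have h1 : HasDerivAt (fun u => ((1 / lam) * Real.exp (lam * u)) • c)
        ((1 / lam * (Real.exp (lam * θ) * lam)) • c) θ :=
      (he.const_mul (1 / lam)).smul_const c
    have h2 : HasDerivAt (fun u => Real.exp (lam * u) • G u)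
        (Real.exp (lam * θ) • (-(f θ)) + (Real.exp (lam * θ) * lam) • G θ) θ :=
      he.smul (hG θ)
    have h3 := h1.add h2
    convert h3 using 1
    · rfl
    · rfl
    · rfl
    · rfl
    have hee : Real.exp (lam * θ) * Real.exp (-(lam * θ)) = 1 := by
      rw [← Real.exp_add]; simp
    have h4 : (1 / lam * (Real.exp (lam * θ) * lam)) = Real.exp (lam * θ) := by
      field_simp
    rw [h4, hψtdef, hfdef]
    simp only [smul_neg, smul_smul, smul_add]
    rw [hee]
    rw [show lam * (1 / lam * Real.exp (lam * θ)) = Real.exp (lam * θ) by field_simp,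
        show lam * Real.exp (lam * θ) = Real.exp (lam * θ) * lam by ring, one_smul]
    abel
  set Ψ' : ℝ → Fin n → ℝ := fun θ => lam • ψ θ - φ θ with hΨdef
  have hder : ∀ θ : ℝ, θ ≤ 0 → HasDerivWithinAt ψ (Ψ' θ) (Iic 0) θ := by
    intro θ hθ
    have h := (hψtd θ).hasDerivWithinAt (s := Iic 0)
    have h2 : Ψ' θ = lam • ψt θ - φt θ := by
      rw [hΨdef]; simp only; rw [hψeq θ hθ, hφteq θ hθ]
    rw [h2]
    exact h.congr (fun y hy => hψeq y hy) (hψeq θ hθ)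
  set K : ℝ := (1 / lam) * ‖c‖ + M / (lam + η) with hKdef
  have hK0 : 0 ≤ K := by positivity
  have hψb : ∀ θ : ℝ, θ ≤ 0 → Real.exp (η * θ) * ‖ψ θ‖ ≤ K := by
    intro θ hθ
    have hu1 : Real.exp (η * θ) * Real.exp (lam * θ) = Real.exp ((lam + η) * θ) := by
      rw [← Real.exp_add]; ring_nf
    have hu3 : Real.exp ((lam + η) * θ) ≤ 1 := by
      rw [Real.exp_le_one_iff]; nlinarith
    have hu4 : (0:ℝ) < Real.exp ((lam + η) * θ) := Real.exp_pos _
    have hw1 : (1:ℝ) ≤ Real.exp (-(lam + η) * θ) := by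
      rw [← Real.exp_zero]; apply Real.exp_le_exp.2; nlinarith
    have hu2 : Real.exp ((lam + η) * θ) * Real.exp (-(lam + η) * θ) = 1 := by
      rw [← Real.exp_add]; ring_nf; exact Real.exp_zero
    -- integrand bound
    set g : ℝ → ℝ := fun l => (M * Real.exp (lam * θ)) * Real.exp ((-(lam + η)) * l) with hgdef
    have hgi : IntervalIntegrable g MeasureTheory.volume θ 0 := by
      apply Continuous.intervalIntegrable
      exact continuous_const.mul (Real.continuous_exp.comp (continuous_const.mul continuous_id))
    have hpt : ∀ᵐ t ∂MeasureTheory.volume.restrict (Set.uIoc θ 0),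
        ‖Real.exp (lam * (θ - t)) • φ t‖ ≤ g t := by
      apply MeasureTheory.ae_restrict_of_forall_mem measurableSet_uIoc
      intro t ht
      rw [uIoc_of_le hθ] at ht
      have ht0 : t ≤ 0 := ht.2
      have heet : Real.exp (η * t) * Real.exp (-(η * t)) = 1 := by
        rw [← Real.exp_add]; simp
      have hφb : ‖φ t‖ ≤ M * Real.exp (-(η * t)) := by
        calc ‖φ t‖ = (Real.exp (η * t) * ‖φ t‖) * Real.exp (-(η * t)) := by
              rw [mul_comm (Real.exp (η * t)) ‖φ t‖, mul_assoc, heet, mul_one]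
          _ ≤ M * Real.exp (-(η * t)) :=
              mul_le_mul_of_nonneg_right (hMb t ht0) (Real.exp_pos _).le
      rw [norm_smul, Real.norm_eq_abs, abs_of_pos (Real.exp_pos _)]
      calc Real.exp (lam * (θ - t)) * ‖φ t‖
          ≤ Real.exp (lam * (θ - t)) * (M * Real.exp (-(η * t))) :=
            mul_le_mul_of_nonneg_left hφb (Real.exp_pos _).le
        _ = g t := by
            rw [hgdef]
            simp only
            rw [show (M * Real.exp (lam * θ)) * Real.exp ((-(lam + η)) * t)
                = M * (Real.exp (lam * θ) * Real.exp ((-(lam + η)) * t)) by ring,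
              ← Real.exp_add,
              show lam * θ + -(lam + η) * t = lam * (θ - t) + -(η * t) by ring,
              Real.exp_add]
            ring
    have hint : ‖∫ l in θ..(0:ℝ), Real.exp (lam * (θ - l)) • φ l‖ ≤ |∫ l in θ..(0:ℝ), g l| :=
      intervalIntegral.norm_integral_le_abs_of_norm_le hpt hgi
    have hval : ∫ l in θ..(0:ℝ), g l
        = M * Real.exp (lam * θ) * (Real.exp (-(lam + η) * θ) - 1) / (lam + η) := by
      rw [hgdef]
      simp only
      rw [intervalIntegral.integral_const_mul, aux_integral_exp_mul (by nlinarith) θ 0]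
      rw [mul_zero, Real.exp_zero]
      have haux : ∀ a w L : ℝ, L ≠ 0 → a * ((1 - w) / (-L)) = a * (w - 1) / L := by
        intro a w L hL
        rw [div_neg, ← neg_div, neg_sub, mul_div_assoc]
      exact haux _ _ _ (by nlinarith)
    have hvnn : 0 ≤ M * Real.exp (lam * θ) * (Real.exp (-(lam + η) * θ) - 1) / (lam + η) := by
      apply div_nonneg _ (by nlinarith)
      apply mul_nonneg (by positivity)
      nlinarith
    have hb2 : Real.exp (η * θ) * |∫ l in θ..(0:ℝ), g l| ≤ M / (lam + η) := by
      rw [hval, abs_of_nonneg hvnn]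
      rw [show Real.exp (η * θ) * (M * Real.exp (lam * θ) * (Real.exp (-(lam + η) * θ) - 1) / (lam + η))
          = (Real.exp (η * θ) * (M * Real.exp (lam * θ) * (Real.exp (-(lam + η) * θ) - 1))) / (lam + η)
          by ring]
      rw [div_le_div_iff₀ (by nlinarith) (by nlinarith)]
      have hkey : Real.exp (η * θ) * (M * Real.exp (lam * θ) * (Real.exp (-(lam + η) * θ) - 1))
          = M * (Real.exp ((lam + η) * θ) * Real.exp (-(lam + η) * θ) - Real.exp ((lam + η) * θ)) := by
        rw [← hu1]; ring
      rw [hkey, hu2]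
      nlinarith [mul_nonneg hM0 hu4.le]
    have hb1 : Real.exp (η * θ) * ‖((1 / lam) * Real.exp (lam * θ)) • c‖ ≤ (1 / lam) * ‖c‖ := by
      rw [norm_smul, Real.norm_eq_abs, abs_of_pos (by positivity)]
      rw [show Real.exp (η * θ) * (1 / lam * Real.exp (lam * θ) * ‖c‖)
          = (Real.exp (η * θ) * Real.exp (lam * θ)) * (1 / lam * ‖c‖) by ring, hu1]
      nlinarith [mul_nonneg (by positivity : (0:ℝ) ≤ 1 / lam * ‖c‖) (sub_nonneg.2 hu3)]
    calc Real.exp (η * θ) * ‖ψ θ‖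
        ≤ Real.exp (η * θ) * (‖((1 / lam) * Real.exp (lam * θ)) • c‖
            + ‖∫ l in θ..(0:ℝ), Real.exp (lam * (θ - l)) • φ l‖) := by
          apply mul_le_mul_of_nonneg_left _ (Real.exp_pos _).le
          rw [hψ]
          exact norm_add_le _ _
      _ = Real.exp (η * θ) * ‖((1 / lam) * Real.exp (lam * θ)) • c‖
            + Real.exp (η * θ) * ‖∫ l in θ..(0:ℝ), Real.exp (lam * (θ - l)) • φ l‖ := by ring
      _ ≤ (1 / lam) * ‖c‖ + M / (lam + η) := by
          apply add_le_add hb1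
          exact le_trans (mul_le_mul_of_nonneg_left hint (Real.exp_pos _).le) hb2
      _ = K := rfl
  have hcont : ContinuousOn ψ (Iic 0) := fun θ hθ => (hder θ hθ).continuousWithinAt
  have hΨcont : ContinuousOn Ψ' (Iic 0) := by
    rw [hΨdef]
    exact (hcont.const_smul lam).sub hφ.1
  have hΨb : ∀ θ : ℝ, θ ≤ 0 → Real.exp (η * θ) * ‖Ψ' θ‖ ≤ lam * K + M := by
    intro θ hθ
    have h1 : ‖Ψ' θ‖ ≤ lam * ‖ψ θ‖ + ‖φ θ‖ := by
      rw [hΨdef]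
      refine le_trans (norm_sub_le _ _) ?_
      rw [norm_smul, Real.norm_eq_abs, abs_of_pos hlam]
    calc Real.exp (η * θ) * ‖Ψ' θ‖ ≤ Real.exp (η * θ) * (lam * ‖ψ θ‖ + ‖φ θ‖) :=
          mul_le_mul_of_nonneg_left h1 (Real.exp_pos _).le
      _ = lam * (Real.exp (η * θ) * ‖ψ θ‖) + Real.exp (η * θ) * ‖φ θ‖ := by ring
      _ ≤ lam * K + M := add_le_add (mul_le_mul_of_nonneg_left (hψb θ hθ) hlam.le) (hMb θ hθ)
  -- uniform continuity of the weighted ψ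
  set gψ : ℝ → Fin n → ℝ := fun θ => Real.exp (η * θ) • ψ θ with hgψdef
  set D : ℝ → Fin n → ℝ :=
    fun θ => Real.exp (η * θ) • Ψ' θ + (Real.exp (η * θ) * η) • ψ θ with hDdef
  have hDder : ∀ x ∈ Iic (0:ℝ), HasDerivWithinAt gψ (D x) (Iic 0) x := by
    intro x hx
    have heη : HasDerivAt (fun u => Real.exp (η * u)) (Real.exp (η * x) * η) x :=
      HasDerivAt.exp (by simpa using (hasDerivAt_id x).const_mul η)
    exact heη.hasDerivWithinAt.smul (hder x hx)
  set C : ℝ := (lam * K + M) + η * K with hCdef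
  have hC0 : 0 ≤ C := by positivity
  have hDb : ∀ x ∈ Iic (0:ℝ), ‖D x‖ ≤ C := by
    intro x hx
    have hx0 : x ≤ 0 := hx
    rw [hDdef]
    refine le_trans (norm_add_le _ _) ?_
    rw [norm_smul, norm_smul, Real.norm_eq_abs, Real.norm_eq_abs,
      abs_of_pos (Real.exp_pos _), abs_of_pos (by positivity)]
    apply add_le_add (hΨb x hx0)
    calc Real.exp (η * x) * η * ‖ψ x‖ = η * (Real.exp (η * x) * ‖ψ x‖) := by ring
      _ ≤ η * K := mul_le_mul_of_nonneg_left (hψb x hx0) hη.le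
  have hlip : LipschitzOnWith C.toNNReal gψ (Iic 0) := by
    apply Convex.lipschitzOnWith_of_nnnorm_hasDerivWithin_le (convex_Iic 0) hDder
    intro x hx
    rw [← NNReal.coe_le_coe, coe_nnnorm, Real.coe_toNNReal _ hC0]
    exact hDb x hx
  have hUCψ : UniformContinuousOn (fun θ => Real.exp (η * θ) • ψ θ) (Iic 0) :=
    hlip.uniformContinuousOn
  have hUCΨ : UniformContinuousOn (fun θ => Real.exp (η * θ) • Ψ' θ) (Iic 0) := by
    have hfe : (fun θ => Real.exp (η * θ) • Ψ' θ)
        = fun θ => lam • (Real.exp (η * θ) • ψ θ) - Real.exp (η * θ) • φ θ := by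
      funext θ
      rw [hΨdef]
      simp only
      rw [smul_sub, smul_comm]
    rw [hfe, uniformContinuousOn_iff_restrict]
    have h1 := uniformContinuousOn_iff_restrict.mp hUCψ
    have h2 := uniformContinuousOn_iff_restrict.mp hφ.2.2
    exact (h1.const_smul lam).sub h2
  have hbA : BddAbove ((fun θ => Real.exp (η * θ) * ‖ψ θ‖) '' Iic 0) := by
    refine ⟨K, ?_⟩
    rintro x ⟨θ, hθ, rfl⟩
    exact hψb θ hθ
  have hbA' : BddAbove ((fun θ => Real.exp (η * θ) * ‖Ψ' θ‖) '' Iic 0) := by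
    refine ⟨lam * K + M, ?_⟩
    rintro x ⟨θ, hθ, rfl⟩
    exact hΨb θ hθ
  refine ⟨Ψ', ⟨⟨hcont, hbA, hUCψ⟩, ⟨hΨcont, hbA', hUCΨ⟩, fun θ hθ => hder θ hθ⟩, ?_, ?_⟩
  · rw [hΨdef]
    simp only
    rw [hψ]
    simp only [mul_zero, Real.exp_zero, mul_one, intervalIntegral.integral_same, add_zero,
      smul_smul]
    rw [show lam * (1 / lam) = 1 by field_simp, one_smul, hcdef]
    abel
  · intro θ _
    rw [hΨdef]
    simp
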